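/- For non-negative integers a, b, c, the q-identity ∑_{k=0}^{a} ((1−q^{2k})·q^{2k²−k−1}/(1−q^a))·qbinom(a+b,a+k)·qbinom(b+c,b+k)·qbinom(c+a,c+k) = qbinom(a+b,a)·∑_{j=0}^{c−1} q^j·qbinom(a+j,a)·qbinom(b+j,b−1) holds (as rational functions in q), assuming a ≥ 1. -/

import Mathlib

open Finset Polynomial

/-- Gaussian binomial coefficient as a polynomial in `q`, via the q-Pascal rule. -/
noncomputable def qb : ℕ → ℕ → Polynomial ℚ
  | _, 0 => 1
  | 0, _ + 1 => 0
  | n + 1, k + 1 => qb n k + Polynomial.X ^ (k + 1) * qb n (k + 1)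

/-- Gaussian binomial with integer arguments, as a rational function in `q`,
zero outside `0 ≤ k ≤ n`. -/
noncomputable def qbinom (n k : ℤ) : RatFunc ℚ :=
  if 0 ≤ k ∧ k ≤ n then algebraMap (Polynomial ℚ) (RatFunc ℚ) (qb n.toNat k.toNat) else 0

lemma qb_zero (n : ℕ) : qb n 0 = 1 := by cases n <;> rfl
lemma qb_zero_succ (k : ℕ) : qb 0 (k + 1) = 0 := rfl
lemma qb_succ (n k : ℕ) : qb (n + 1) (k + 1) = qb n k + X ^ (k + 1) * qb n (k + 1) := rfl
lemma qb_eq_zero : ∀ n k : ℕ, n < k → qb n k = 0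
  | _, 0, h => absurd h (by omega)
  | 0, _ + 1, _ => rfl
  | n + 1, k + 1, h => by
      rw [qb_succ, qb_eq_zero n k (by omega), qb_eq_zero n (k + 1) (by omega)]; ring
lemma qb_self : ∀ n : ℕ, qb n n = 1
  | 0 => rfl
  | n + 1 => by rw [qb_succ, qb_self n, qb_eq_zero n (n + 1) (by omega)]; ring

lemma X_pow_ne_zero' (j : ℕ) : (X : ℚ[X]) ^ j ≠ 0 := pow_ne_zero _ X_ne_zero

lemma one_sub_X_pow_ne_zero (j : ℕ) (hj : 1 ≤ j) : (1 : ℚ[X]) - X ^ j ≠ 0 := by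
  intro h
  have h2 := congrArg (Polynomial.eval 0) h
  simp [zero_pow (by omega : j ≠ 0)] at h2

/-- master absorption pair -/
lemma qb_AB (n : ℕ) :
    (∀ m : ℕ, X ^ (m + 1) * (1 - X ^ (m + 1)) * qb n (m + 1)
      = (X ^ (m + 1) - X ^ (n + 1)) * qb n m) ∧
    (∀ m : ℕ, X ^ (m + 1) * (1 - X ^ (n + 1)) * qb n m
      = (X ^ (m + 1) - X ^ (n + 2)) * qb (n + 1) m) := by
  induction n with
  | zero =>
    constructor
    · intro m
      match m with
      | 0 => rw [qb_zero_succ, qb_zero]; ring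
      | m' + 1 => rw [qb_zero_succ, qb_zero_succ]; ring
    · intro m
      match m with
      | 0 => rw [qb_zero, qb_zero]; ring
      | 0 + 1 =>
        rw [qb_zero_succ, qb_succ, qb_zero, qb_zero_succ]; ring
      | m' + 1 + 1 =>
        rw [qb_zero_succ, qb_succ, qb_zero_succ, qb_zero_succ]; ring
  | succ n ih =>
    have hA : ∀ m : ℕ, X ^ (m + 1) * (1 - X ^ (m + 1)) * qb (n + 1) (m + 1)
        = (X ^ (m + 1) - X ^ (n + 2)) * qb (n + 1) m := by
      intro m
      rw [qb_succ]
      linear_combination (X : ℚ[X]) ^ (m + 1) * (ih.1 m) + ih.2 m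
    refine ⟨hA, fun m => ?_⟩
    match m with
    | 0 => rw [qb_zero, qb_zero]; ring
    | m' + 1 =>
      rw [qb_succ (n + 1) m']
      apply mul_left_cancel₀ (mul_ne_zero (X_pow_ne_zero' (m' + 1))
        (one_sub_X_pow_ne_zero (m' + 1) (by omega)))
      linear_combination ((X : ℚ[X]) ^ (m' + 2) * (1 - X ^ (n + 2))
        - X ^ (m' + 1) * (X ^ (m' + 2) - X ^ (n + 3))) * hA m'

lemma qb_A (n m : ℕ) : X ^ (m + 1) * (1 - X ^ (m + 1)) * qb n (m + 1)
    = (X ^ (m + 1) - X ^ (n + 1)) * qb n m := (qb_AB n).1 m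

lemma qb_P2 (n m : ℕ) : X ^ (m + 1) * qb (n + 1) (m + 1)
    = X ^ (n + 1) * qb n m + X ^ (m + 1) * qb n (m + 1) := by
  rw [qb_succ]
  linear_combination -(qb_A n m)

lemma qb_symm : ∀ n s t : ℕ, s + t = n → qb n s = qb n t := by
  intro n
  induction n with
  | zero =>
    intro s t h
    obtain ⟨rfl, rfl⟩ : s = 0 ∧ t = 0 := by omega
    rfl
  | succ n ih =>
    intro s t h
    match s, t with
    | 0, t =>
      obtain rfl : t = n + 1 := by omega
      rw [qb_zero, qb_self]
    | s, 0 =>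
      obtain rfl : s = n + 1 := by omega
      rw [qb_zero, qb_self]
    | s' + 1, t' + 1 =>
      have h1 : s' + (t' + 1) = n := by omega
      have h2 : (s' + 1) + t' = n := by omega
      apply mul_left_cancel₀ (X_pow_ne_zero' (s' + 1))
      have e1 := qb_P2 n s'
      have e2 := qb_succ n t'
      rw [ih s' (t' + 1) h1] at e1
      rw [← ih (s' + 1) t' h2] at e2
      rw [e1, e2]
      have hn : n + 1 = s' + 1 + (t' + 1) := by omega
      rw [hn]
      ring

lemma key_poly (a b c k m : ℕ) (hm : m + 1 = b + k) :
    X ^ (a + b) * (1 - X ^ (b + k)) * (1 - X ^ (c + k + 1)) *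
      ((1 - X ^ (2 * k)) * X ^ (2 * k * k + k + 1) * qb (a + b) (a + k) *
        ((qb (b + c) m + X ^ (b + k) * qb (b + c) (b + k)) *
          (qb (c + a) (c + k) + X ^ (c + k + 1) * qb (c + a) (c + k + 1))
          - qb (b + c) (b + k) * qb (c + a) (c + k)))
    = X ^ (a + b) * (1 - X ^ (b + k)) * (1 - X ^ (c + k + 1)) *
      (X ^ (2 * k * k + c + 2) * (1 - X ^ (a + k)) * qb (a + b) (a + k) * qb (b + c) m *
          qb (c + a) (c + k)
        - X ^ (2 * k * k + 4 * k + c + 2) * (1 - X ^ (a + k + 1)) * qb (a + b) (a + k + 1) *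
          qb (b + c) (b + k) * qb (c + a) (c + k + 1)) := by
  have h1 := qb_A (a + b) (a + k)
  have h2 := qb_A (b + c) m
  rw [hm] at h2
  have h3 := qb_A (c + a) (c + k)
  have e1 : a + k + 1 = a + k + 1 := rfl
  linear_combination
    (X : ℚ[X]) ^ (2 * k * k + 3 * k + b + c + 1) * (1 - X ^ (b + k)) * (1 - X ^ (c + k + 1)) *
        qb (b + c) (b + k) * qb (c + a) (c + k + 1) * h1
    + X ^ (2 * k * k + a + 1) * (1 - X ^ (b + k)) * qb (a + b) (a + k) * qb (c + a) (c + k) *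
        (X ^ (c + k + 1) - X ^ (a + c + 2 * k + 1) - 1 + X ^ (2 * k)) * h2
    + X ^ (2 * k * k + a + b + k + 1) * (1 - X ^ (b + k)) * qb (a + b) (a + k) *
        ((1 - X ^ (2 * k)) * qb (b + c) m + X ^ (2 * k) * (1 - X ^ (b + k)) * qb (b + c) (b + k)) * h3

lemma qbinom_natCast (n k : ℕ) : qbinom (n : ℤ) (k : ℤ) =
    algebraMap (Polynomial ℚ) (RatFunc ℚ) (qb n k) := by
  unfold qbinom
  by_cases h : k ≤ n
  · rw [if_pos ⟨Int.natCast_nonneg k, by exact_mod_cast h⟩]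
    simp
  · rw [if_neg (by push_cast; omega), qb_eq_zero n k (by omega), map_zero]

lemma qbinom_cast {N K : ℤ} (n k : ℕ) (hN : N = (n : ℤ)) (hK : K = (k : ℤ)) :
    qbinom N K = algebraMap (Polynomial ℚ) (RatFunc ℚ) (qb n k) := by
  rw [hN, hK, qbinom_natCast]

lemma qbinom_neg {N K : ℤ} (h : K < 0) : qbinom N K = 0 := by
  unfold qbinom
  rw [if_neg (by omega)]

lemma qbinom_gt {N K : ℤ} (h : N < K) : qbinom N K = 0 := by
  unfold qbinom
  rw [if_neg (by omega)]

lemma RX_ne_zero : (RatFunc.X : RatFunc ℚ) ≠ 0 := RatFunc.X_ne_zero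

lemma RX_pow_ne_zero (j : ℕ) : (RatFunc.X : RatFunc ℚ) ^ j ≠ 0 :=
  pow_ne_zero _ RatFunc.X_ne_zero

lemma one_sub_RX_pow_ne_zero (j : ℕ) (hj : 1 ≤ j) :
    (1 : RatFunc ℚ) - RatFunc.X ^ j ≠ 0 := by
  have : (1 : RatFunc ℚ) - RatFunc.X ^ j
      = algebraMap (Polynomial ℚ) (RatFunc ℚ) (1 - X ^ j) := by
    rw [map_sub, map_pow, map_one, RatFunc.algebraMap_X]
  rw [this]
  exact fun hh => one_sub_X_pow_ne_zero j hj (RatFunc.algebraMap_injective ℚ (by simpa using hh))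

noncomputable def Taux (a b c m : ℕ) : RatFunc ℚ :=
  RatFunc.X ^ (2 * m * m + c) * (1 - RatFunc.X ^ (a + m)) *
      qbinom ((a : ℤ) + b) ((a : ℤ) + m) * qbinom ((b : ℤ) + c) ((b : ℤ) + m - 1) *
      qbinom ((c : ℤ) + a) ((c : ℤ) + m) /
    (RatFunc.X ^ (2 * m) * (1 - RatFunc.X ^ a))

lemma hz (k : ℕ) : (RatFunc.X : RatFunc ℚ) ^ (2 * (k : ℤ) ^ 2 - k - 1)
    = RatFunc.X ^ (2 * k * k + k + 1) / RatFunc.X ^ (2 * k + 2) := by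
  rw [eq_div_iff (RX_pow_ne_zero _), ← zpow_natCast (RatFunc.X : RatFunc ℚ) (2 * k * k + k + 1),
    ← zpow_natCast (RatFunc.X : RatFunc ℚ) (2 * k + 2), ← zpow_add₀ RatFunc.X_ne_zero]
  congr 1
  push_cast
  ring

lemma step_term (a b c : ℕ) (ha : 1 ≤ a) (k : ℕ) :
    (1 - RatFunc.X ^ (2 * k)) * RatFunc.X ^ (2 * (k : ℤ) ^ 2 - k - 1) / (1 - RatFunc.X ^ a) *
        qbinom ((a : ℤ) + b) ((a : ℤ) + k) * qbinom ((b : ℤ) + (c + 1 : ℕ)) ((b : ℤ) + k) *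
        qbinom (((c + 1 : ℕ) : ℤ) + a) (((c + 1 : ℕ) : ℤ) + k)
    = (1 - RatFunc.X ^ (2 * k)) * RatFunc.X ^ (2 * (k : ℤ) ^ 2 - k - 1) / (1 - RatFunc.X ^ a) *
        qbinom ((a : ℤ) + b) ((a : ℤ) + k) * qbinom ((b : ℤ) + c) ((b : ℤ) + k) *
        qbinom ((c : ℤ) + a) ((c : ℤ) + k)
      + (Taux a b c k - Taux a b c (k + 1)) := by
  by_cases hbk : b + k = 0
  · obtain ⟨hb, hk⟩ : b = 0 ∧ k = 0 := by omega
    subst hb; subst hk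
    have h1 : Taux a 0 c 0 = 0 := by
      unfold Taux
      rw [qbinom_neg (show ((0:ℕ) : ℤ) + ((0:ℕ) : ℤ) - 1 < 0 by norm_num)]
      simp
    have h2 : Taux a 0 c 1 = 0 := by
      unfold Taux
      rw [qbinom_gt (show ((a:ℕ) : ℤ) + ((0:ℕ) : ℤ) < ((a:ℕ) : ℤ) + ((1:ℕ) : ℤ) by norm_num)]
      simp
    rw [h1, h2]
    norm_num
  · obtain ⟨m, hm⟩ : ∃ m, m + 1 = b + k := ⟨b + k - 1, by omega⟩
    set φ := algebraMap (Polynomial ℚ) (RatFunc ℚ) with hφ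
    have hQplus : qbinom ((b : ℤ) + (c + 1 : ℕ)) ((b : ℤ) + k)
        = φ (qb (b + c) m) + RatFunc.X ^ (b + k) * φ (qb (b + c) (b + k)) := by
      rw [qbinom_cast (b + c + 1) (b + k) (by push_cast; ring) (by push_cast; ring)]
      have : qb (b + c + 1) (b + k) = qb (b + c) m + X ^ (b + k) * qb (b + c) (b + k) := by
        calc qb (b + c + 1) (b + k) = qb (b + c + 1) (m + 1) := by rw [hm]
          _ = qb (b + c) m + X ^ (m + 1) * qb (b + c) (m + 1) := qb_succ _ _
          _ = qb (b + c) m + X ^ (b + k) * qb (b + c) (b + k) := by rw [hm]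
      rw [this, map_add, map_mul, map_pow, RatFunc.algebraMap_X]
    have hRplus : qbinom (((c + 1 : ℕ) : ℤ) + a) (((c + 1 : ℕ) : ℤ) + k)
        = φ (qb (c + a) (c + k)) + RatFunc.X ^ (c + k + 1) * φ (qb (c + a) (c + k + 1)) := by
      rw [qbinom_cast (c + a + 1) (c + k + 1) (by push_cast; ring) (by push_cast; ring)]
      rw [show qb (c + a + 1) (c + k + 1) = qb (c + a) (c + k) + X ^ (c + k + 1) * qb (c + a) (c + k + 1) from rfl,
        map_add, map_mul, map_pow, RatFunc.algebraMap_X]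
    have hP1 : qbinom ((a : ℤ) + b) ((a : ℤ) + k) = φ (qb (a + b) (a + k)) :=
      qbinom_cast _ _ (by push_cast; ring) (by push_cast; ring)
    have hP1' : qbinom ((a : ℤ) + b) ((a : ℤ) + (k + 1 : ℕ)) = φ (qb (a + b) (a + k + 1)) :=
      qbinom_cast _ _ (by push_cast; ring) (by push_cast; ring)
    have hQ : qbinom ((b : ℤ) + c) ((b : ℤ) + k) = φ (qb (b + c) (b + k)) :=
      qbinom_cast _ _ (by push_cast; ring) (by push_cast; ring)
    have hQ' : qbinom ((b : ℤ) + c) ((b : ℤ) + k - 1) = φ (qb (b + c) m) :=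
      qbinom_cast _ _ (by push_cast; ring) (by push_cast; omega)
    have hQ'2 : qbinom ((b : ℤ) + c) ((b : ℤ) + (k + 1 : ℕ) - 1) = φ (qb (b + c) (b + k)) :=
      qbinom_cast _ _ (by push_cast; ring) (by push_cast; omega)
    have hR : qbinom ((c : ℤ) + a) ((c : ℤ) + k) = φ (qb (c + a) (c + k)) :=
      qbinom_cast _ _ (by push_cast; ring) (by push_cast; ring)
    have hR' : qbinom ((c : ℤ) + a) ((c : ℤ) + (k + 1 : ℕ)) = φ (qb (c + a) (c + k + 1)) :=
      qbinom_cast _ _ (by push_cast; ring) (by push_cast; ring)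
    have E1 := congrArg φ (key_poly a b c k m hm)
    have hX : φ X = RatFunc.X := RatFunc.algebraMap_X
    simp only [map_mul, map_sub, map_add, map_pow, map_one, hX] at E1
    have hG : (RatFunc.X ^ (a + b) * (1 - RatFunc.X ^ (b + k)) *
        (1 - RatFunc.X ^ (c + k + 1)) : RatFunc ℚ) ≠ 0 :=
      mul_ne_zero (mul_ne_zero (RX_pow_ne_zero _) (one_sub_RX_pow_ne_zero _ (by omega)))
        (one_sub_RX_pow_ne_zero _ (by omega))
    have E2 : (1 - RatFunc.X ^ (2 * k)) * RatFunc.X ^ (2 * k * k + k + 1) * φ (qb (a + b) (a + k)) *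
        ((φ (qb (b + c) m) + RatFunc.X ^ (b + k) * φ (qb (b + c) (b + k))) *
          (φ (qb (c + a) (c + k)) + RatFunc.X ^ (c + k + 1) * φ (qb (c + a) (c + k + 1)))
          - φ (qb (b + c) (b + k)) * φ (qb (c + a) (c + k)))
        = RatFunc.X ^ (2 * k * k + c + 2) * (1 - RatFunc.X ^ (a + k)) * φ (qb (a + b) (a + k)) *
            φ (qb (b + c) m) * φ (qb (c + a) (c + k))
          - RatFunc.X ^ (2 * k * k + 4 * k + c + 2) * (1 - RatFunc.X ^ (a + k + 1)) *
            φ (qb (a + b) (a + k + 1)) * φ (qb (b + c) (b + k)) * φ (qb (c + a) (c + k + 1)) := by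
      apply mul_left_cancel₀ hG
      linear_combination E1
    rw [hz]
    unfold Taux
    rw [hQplus, hRplus, hP1, hP1', hQ, hQ', hQ'2, hR, hR']
    have h1 : ((1 : RatFunc ℚ) - RatFunc.X ^ a) ≠ 0 := one_sub_RX_pow_ne_zero a ha
    have cancel2 : ∀ N : RatFunc ℚ, N / RatFunc.X ^ (2 * k)
        = (RatFunc.X ^ 2 * N) / RatFunc.X ^ (2 * k + 2) := by
      intro N
      rw [div_eq_div_iff (RX_pow_ne_zero _) (RX_pow_ne_zero _)]
      ring
    rw [show (2 * (k + 1) * (k + 1) + c) = 2 * k * k + 4 * k + c + 2 by ring,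
      show (2 * (k + 1)) = 2 * k + 2 by ring]
    rw [← div_div, ← div_div, cancel2]
    have e_t1 : (1 - RatFunc.X ^ (2 * k)) * (RatFunc.X ^ (2 * k * k + k + 1) / RatFunc.X ^ (2 * k + 2)) /
          (1 - RatFunc.X ^ a) * φ (qb (a + b) (a + k)) *
          (φ (qb (b + c) m) + RatFunc.X ^ (b + k) * φ (qb (b + c) (b + k))) *
          (φ (qb (c + a) (c + k)) + RatFunc.X ^ (c + k + 1) * φ (qb (c + a) (c + k + 1)))
        = (1 - RatFunc.X ^ (2 * k)) * RatFunc.X ^ (2 * k * k + k + 1) * φ (qb (a + b) (a + k)) *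
          ((φ (qb (b + c) m) + RatFunc.X ^ (b + k) * φ (qb (b + c) (b + k))) *
          (φ (qb (c + a) (c + k)) + RatFunc.X ^ (c + k + 1) * φ (qb (c + a) (c + k + 1)))) /
          RatFunc.X ^ (2 * k + 2) / (1 - RatFunc.X ^ a) := by
      ring
    have e_t2 : (1 - RatFunc.X ^ (2 * k)) * (RatFunc.X ^ (2 * k * k + k + 1) / RatFunc.X ^ (2 * k + 2)) /
          (1 - RatFunc.X ^ a) * φ (qb (a + b) (a + k)) * φ (qb (b + c) (b + k)) * φ (qb (c + a) (c + k))
        = (1 - RatFunc.X ^ (2 * k)) * RatFunc.X ^ (2 * k * k + k + 1) * φ (qb (a + b) (a + k)) *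
          (φ (qb (b + c) (b + k)) * φ (qb (c + a) (c + k))) /
          RatFunc.X ^ (2 * k + 2) / (1 - RatFunc.X ^ a) := by
      ring
    rw [e_t1, e_t2, div_sub_div_same, div_sub_div_same, ← add_div, ← add_div]
    congr 2
    linear_combination E2

lemma Taux_top (a b c : ℕ) : Taux a b c (a + 1) = 0 := by
  unfold Taux
  rw [qbinom_gt (show ((c : ℕ) : ℤ) + ((a : ℕ) : ℤ) < ((c : ℕ) : ℤ) + ((a + 1 : ℕ) : ℤ) by
    push_cast; omega)]
  simp

lemma Taux_zero (a b c : ℕ) (ha : 1 ≤ a) :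
    Taux a b c 0 = qbinom ((a : ℤ) + b) a *
      ((RatFunc.X : RatFunc ℚ) ^ c * qbinom ((a : ℤ) + c) a * qbinom ((b : ℤ) + c) ((b : ℤ) - 1)) := by
  unfold Taux
  have hsym : qbinom ((c : ℤ) + a) ((c : ℤ)) = qbinom ((a : ℤ) + c) ((a : ℤ)) := by
    rw [qbinom_cast (c + a) c (by push_cast; ring) rfl,
      qbinom_cast (a + c) a (by push_cast; ring) rfl]
    exact congrArg _ (by rw [qb_symm (c + a) c a rfl, Nat.add_comm c a])
  simp only [Nat.cast_zero, add_zero, Nat.mul_zero, Nat.zero_mul, Nat.zero_add, zero_add,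
    pow_zero, one_mul, mul_zero]
  rw [hsym, div_eq_iff (one_sub_RX_pow_ne_zero a ha)]
  ring

theorem stmt_17 (a b c : ℕ) (ha : 1 ≤ a) :
    ∑ k ∈ range (a + 1),
        (1 - RatFunc.X ^ (2 * k)) * RatFunc.X ^ (2 * (k : ℤ) ^ 2 - k - 1) /
            (1 - RatFunc.X ^ a) *
          qbinom ((a : ℤ) + b) ((a : ℤ) + k) * qbinom ((b : ℤ) + c) ((b : ℤ) + k) *
          qbinom ((c : ℤ) + a) ((c : ℤ) + k) =
      qbinom ((a : ℤ) + b) a *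
        ∑ j ∈ range c,
          (RatFunc.X : RatFunc ℚ) ^ j * qbinom ((a : ℤ) + j) a *
            qbinom ((b : ℤ) + j) ((b : ℤ) - 1) := by
  induction c with
  | zero =>
    rw [Finset.range_zero, Finset.sum_empty, mul_zero]
    apply Finset.sum_eq_zero
    intro k hk
    match k with
    | 0 => simp
    | j + 1 =>
      rw [qbinom_gt (show ((b : ℕ) : ℤ) + ((0 : ℕ) : ℤ) < ((b : ℕ) : ℤ) + ((j + 1 : ℕ) : ℤ) by
        push_cast; omega)]
      ring
  | succ c ih =>
    rw [Finset.sum_congr rfl (fun k _ => step_term a b c ha k), Finset.sum_add_distrib,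
      Finset.sum_range_sub' (fun m => Taux a b c m) (a + 1), ih, Taux_top, Taux_zero a b c ha,
      Finset.sum_range_succ, mul_add]
    ring
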